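/- Let a be a bicomplex number in Ω (i.e., both idempotent components of a lie in the open unit disk), and let b_a(Z) = (Z - a)(1 - Za*)⁻¹ be the bicomplex Blaschke factor. Then for every Z with both idempotent components in the open unit disk, 1 - b_a(Z)·b_a(Z)* = (1 - ZZ*)(1 - aa*)·((1 - Za*)(1 - Z*a))⁻¹ ∈ 𝔻⁺, and if ZZ* = 1 then b_a(Z)·b_a(Z)* = 1. -/

import Mathlib

@[ext] structure BC where
  z1 : ℂ
  z2 : ℂ

namespace BC

instance : Zero BC := ⟨⟨0, 0⟩⟩
instance : One BC := ⟨⟨1, 0⟩⟩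
instance : Add BC := ⟨fun Z W => ⟨Z.z1 + W.z1, Z.z2 + W.z2⟩⟩
instance : Neg BC := ⟨fun Z => ⟨-Z.z1, -Z.z2⟩⟩
instance : Mul BC := ⟨fun Z W => ⟨Z.z1 * W.z1 - Z.z2 * W.z2, Z.z1 * W.z2 + Z.z2 * W.z1⟩⟩

@[simp] lemma zero_z1 : (0 : BC).z1 = 0 := rfl
@[simp] lemma zero_z2 : (0 : BC).z2 = 0 := rfl
@[simp] lemma one_z1 : (1 : BC).z1 = 1 := rfl
@[simp] lemma one_z2 : (1 : BC).z2 = 0 := rfl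
@[simp] lemma add_z1 (Z W : BC) : (Z + W).z1 = Z.z1 + W.z1 := rfl
@[simp] lemma add_z2 (Z W : BC) : (Z + W).z2 = Z.z2 + W.z2 := rfl
@[simp] lemma neg_z1 (Z : BC) : (-Z).z1 = -Z.z1 := rfl
@[simp] lemma neg_z2 (Z : BC) : (-Z).z2 = -Z.z2 := rfl
@[simp] lemma mul_z1 (Z W : BC) : (Z * W).z1 = Z.z1 * W.z1 - Z.z2 * W.z2 := rfl
@[simp] lemma mul_z2 (Z W : BC) : (Z * W).z2 = Z.z1 * W.z2 + Z.z2 * W.z1 := rfl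

instance : CommRing BC where
  add_assoc a b c := by ext <;> simp <;> ring
  zero_add a := by ext <;> simp
  add_zero a := by ext <;> simp
  add_comm a b := by ext <;> simp <;> ring
  neg_add_cancel a := by ext <;> simp
  mul_assoc a b c := by ext <;> simp <;> ring
  one_mul a := by ext <;> simp
  mul_one a := by ext <;> simp
  left_distrib a b c := by ext <;> simp <;> ring
  right_distrib a b c := by ext <;> simp <;> ring
  mul_comm a b := by ext <;> simp <;> ring
  zero_mul a := by ext <;> simp
  mul_zero a := by ext <;> simp
  nsmul := nsmulRec
  zsmul := zsmulRec

/-- Euclidean norm of a bicomplex number. -/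
noncomputable def enorm (Z : BC) : ℝ :=
  Real.sqrt (‖Z.z1‖ ^ 2 + ‖Z.z2‖ ^ 2)

/-- Embedding of ℂ(𝐢) into BC. -/
def ofC (z : ℂ) : BC := ⟨z, 0⟩

/-- Embedding of ℝ into BC. -/
noncomputable def ofR (r : ℝ) : BC := ⟨(r : ℂ), 0⟩

/-- The idempotent 𝐞 = (1 + 𝐢𝐣)/2. -/
noncomputable def e : BC := ⟨1 / 2, Complex.I / 2⟩

/-- The idempotent 𝐞† = (1 - 𝐢𝐣)/2. -/
noncomputable def edag : BC := ⟨1 / 2, -(Complex.I / 2)⟩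

/-- First idempotent component β₁ = z₁ - 𝐢 z₂. -/
def beta1 (Z : BC) : ℂ := Z.z1 - Complex.I * Z.z2

/-- Second idempotent component β₂ = z₁ + 𝐢 z₂. -/
def beta2 (Z : BC) : ℂ := Z.z1 + Complex.I * Z.z2

/-- The †-conjugation. -/
def dag (Z : BC) : BC := ⟨Z.z1, -Z.z2⟩

/-- The *-conjugation. -/
def bstar (Z : BC) : BC := ⟨(starRingEnd ℂ) Z.z1, -((starRingEnd ℂ) Z.z2)⟩

/-- The set 𝔻⁺ of positive hyperbolic numbers. -/
def Dpos : Set BC :=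
  {Z | ∃ ν μ : ℝ, 0 ≤ ν ∧ 0 ≤ μ ∧ Z = ofR ν * e + ofR μ * edag}

/-- Partial order induced by 𝔻⁺. -/
def hle (Z W : BC) : Prop := W - Z ∈ Dpos

/-- Hyperbolic-valued norm |Z|ₖ = |β₁|𝐞 + |β₂|𝐞†. -/
noncomputable def hnorm (Z : BC) : BC :=
  ofR ‖beta1 Z‖ * e + ofR ‖beta2 Z‖ * edag

/-- Z is a hyperbolic number: Z = x₁ + y₂ 𝐢𝐣. -/
def isHyp (Z : BC) : Prop := Z.z1.im = 0 ∧ Z.z2.re = 0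


/-- The bicomplex Blaschke factor with zero a. -/
noncomputable def ba (a Z : BC) : BC := (Z - a) * Ring.inverse (1 - Z * bstar a)

/-! ### Auxiliary lemmas -/

@[simp] lemma beta1_one : beta1 1 = 1 := by simp [beta1]
@[simp] lemma beta2_one : beta2 1 = 1 := by simp [beta2]
@[simp] lemma beta1_mul (Z W : BC) : beta1 (Z * W) = beta1 Z * beta1 W := by
  simp only [beta1, mul_z1, mul_z2]
  linear_combination (-(Z.z2 * W.z2)) * Complex.I_sq
@[simp] lemma beta2_mul (Z W : BC) : beta2 (Z * W) = beta2 Z * beta2 W := by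
  simp only [beta2, mul_z1, mul_z2]
  linear_combination (-(Z.z2 * W.z2)) * Complex.I_sq
@[simp] lemma sub_z1 (Z W : BC) : (Z - W).z1 = Z.z1 - W.z1 := by
  rw [sub_eq_add_neg, sub_eq_add_neg]; simp
@[simp] lemma sub_z2 (Z W : BC) : (Z - W).z2 = Z.z2 - W.z2 := by
  rw [sub_eq_add_neg, sub_eq_add_neg]; simp
@[simp] lemma beta1_sub (Z W : BC) : beta1 (Z - W) = beta1 Z - beta1 W := by
  simp only [beta1, sub_z1, sub_z2]; ring
@[simp] lemma beta2_sub (Z W : BC) : beta2 (Z - W) = beta2 Z - beta2 W := by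
  simp only [beta2, sub_z1, sub_z2]; ring
@[simp] lemma beta1_bstar (Z : BC) : beta1 (bstar Z) = (starRingEnd ℂ) (beta1 Z) := by
  simp [beta1, bstar, map_sub, map_mul, Complex.conj_I]
@[simp] lemma beta2_bstar (Z : BC) : beta2 (bstar Z) = (starRingEnd ℂ) (beta2 Z) := by
  simp [beta2, bstar, map_sub, map_mul, Complex.conj_I]

/-- Build a bicomplex number from its idempotent components. -/
noncomputable def mkB (b1 b2 : ℂ) : BC := ⟨(b1 + b2) / 2, (b2 - b1) * (-Complex.I / 2)⟩

@[simp] lemma beta1_mkB (b1 b2 : ℂ) : beta1 (mkB b1 b2) = b1 := by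
  simp only [beta1, mkB]
  linear_combination ((b2 - b1) / 2) * Complex.I_sq
@[simp] lemma beta2_mkB (b1 b2 : ℂ) : beta2 (mkB b1 b2) = b2 := by
  simp only [beta2, mkB]
  linear_combination ((b1 - b2) / 2) * Complex.I_sq

lemma beta_ext {Z W : BC} (h1 : beta1 Z = beta1 W) (h2 : beta2 Z = beta2 W) : Z = W := by
  simp only [beta1, beta2] at h1 h2
  ext
  · linear_combination (h1 + h2) / 2
  · have h : (2 * Complex.I) * Z.z2 = (2 * Complex.I) * W.z2 := by linear_combination h2 - h1
    have h2I : (2 * Complex.I : ℂ) ≠ 0 := by simp [Complex.I_ne_zero]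
    exact mul_left_cancel₀ h2I h

lemma ringInverse_eq {A B : BC} (h : A * B = 1) : Ring.inverse A = B := by
  have hu : IsUnit A := IsUnit.of_mul_eq_one B h
  obtain ⟨u, rfl⟩ := hu
  rw [Ring.inverse_unit]
  exact Units.inv_eq_of_mul_eq_one_right h

lemma ringInverse_betas {Z : BC} (h1 : beta1 Z ≠ 0) (h2 : beta2 Z ≠ 0) :
    Ring.inverse Z = mkB (beta1 Z)⁻¹ (beta2 Z)⁻¹ := by
  apply ringInverse_eq
  apply beta_ext <;> simp <;> field_simp

lemma one_sub_mul_conj_ne {ζ α : ℂ} (hζ : ‖ζ‖ ≤ 1) (hα : ‖α‖ < 1) :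
    (1 : ℂ) - ζ * (starRingEnd ℂ) α ≠ 0 := by
  intro h
  have h1 : ζ * (starRingEnd ℂ) α = 1 := by linear_combination -h
  have : ‖ζ * (starRingEnd ℂ) α‖ < 1 := by
    rw [norm_mul, Complex.norm_conj]
    calc ‖ζ‖ * ‖α‖ ≤ 1 * ‖α‖ :=
          mul_le_mul_of_nonneg_right hζ (norm_nonneg α)
      _ < 1 := by simpa using hα
  rw [h1] at this; simp at this

lemma normSq_key (ζ α : ℂ) :
    Complex.normSq (1 - ζ * (starRingEnd ℂ) α) - Complex.normSq (ζ - α)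
      = (1 - Complex.normSq ζ) * (1 - Complex.normSq α) := by
  simp [Complex.normSq_apply, Complex.mul_re, Complex.mul_im, Complex.sub_re,
    Complex.sub_im, Complex.one_re, Complex.one_im, Complex.conj_re, Complex.conj_im]
  ring

lemma cx_blaschke (ζ α : ℂ) (hζ : ‖ζ‖ < 1) (hα : ‖α‖ < 1) :
    1 - ((ζ - α) * (1 - ζ * (starRingEnd ℂ) α)⁻¹) *
        (starRingEnd ℂ) ((ζ - α) * (1 - ζ * (starRingEnd ℂ) α)⁻¹)
      = (1 - ζ * (starRingEnd ℂ) ζ) * (1 - α * (starRingEnd ℂ) α) *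
        ((1 - ζ * (starRingEnd ℂ) α) * (1 - (starRingEnd ℂ) ζ * α))⁻¹ := by
  have h1 : (1 : ℂ) - ζ * (starRingEnd ℂ) α ≠ 0 := one_sub_mul_conj_ne hζ.le hα
  have h2 : (1 : ℂ) - (starRingEnd ℂ) ζ * α ≠ 0 := by
    intro h
    apply h1
    have := congrArg (starRingEnd ℂ) h
    simpa [mul_comm] using this
  simp only [map_mul, map_sub, map_inv₀, map_one, Complex.conj_conj]
  rw [mul_inv]
  linear_combination (-1 : ℂ) * mul_inv_cancel₀ h1 -
    ((1 - ζ * (starRingEnd ℂ) α) * (1 - ζ * (starRingEnd ℂ) α)⁻¹) * mul_inv_cancel₀ h2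

lemma cx_normSq_le {ζ α : ℂ} (hζ : ‖ζ‖ < 1) (hα : ‖α‖ < 1) :
    Complex.normSq ((ζ - α) * (1 - ζ * (starRingEnd ℂ) α)⁻¹) ≤ 1 := by
  have h1 : (1 : ℂ) - ζ * (starRingEnd ℂ) α ≠ 0 := one_sub_mul_conj_ne hζ.le hα
  rw [map_mul, map_inv₀]
  rw [inv_eq_one_div, mul_comm, div_mul_eq_mul_div, one_mul, div_le_one]
  · have key := normSq_key ζ α
    have hζ' : Complex.normSq ζ < 1 := by
      rw [← Complex.sq_norm]; nlinarith [norm_nonneg ζ]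
    have hα' : Complex.normSq α < 1 := by
      rw [← Complex.sq_norm]; nlinarith [norm_nonneg α]
    nlinarith
  · exact (Complex.normSq_pos).mpr h1

lemma cx_boundary {ζ α : ℂ} (hζ : ζ * (starRingEnd ℂ) ζ = 1) (hα : ‖α‖ < 1) :
    ((ζ - α) * (1 - ζ * (starRingEnd ℂ) α)⁻¹) *
        (starRingEnd ℂ) ((ζ - α) * (1 - ζ * (starRingEnd ℂ) α)⁻¹) = 1 := by
  have hn : Complex.normSq ζ = 1 := by
    have h := (Complex.mul_conj ζ).symm.trans hζ
    exact_mod_cast h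
  have habs : ‖ζ‖ ≤ 1 := by
    have h := Complex.sq_norm ζ
    rw [hn] at h
    nlinarith [norm_nonneg ζ]
  have h1 : (1 : ℂ) - ζ * (starRingEnd ℂ) α ≠ 0 := one_sub_mul_conj_ne habs hα
  have h2 : (1 : ℂ) - (starRingEnd ℂ) ζ * α ≠ 0 := by
    intro h; apply h1
    have := congrArg (starRingEnd ℂ) h
    simpa [mul_comm] using this
  have hnum : (ζ - α) * ((starRingEnd ℂ) ζ - (starRingEnd ℂ) α)
      = (1 - ζ * (starRingEnd ℂ) α) * (1 - (starRingEnd ℂ) ζ * α) := by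
    linear_combination (1 - α * (starRingEnd ℂ) α) * hζ
  simp only [map_mul, map_sub, map_inv₀, map_one, Complex.conj_conj]
  rw [show (ζ - α) * (1 - ζ * (starRingEnd ℂ) α)⁻¹ *
      (((starRingEnd ℂ) ζ - (starRingEnd ℂ) α) * (1 - (starRingEnd ℂ) ζ * α)⁻¹)
      = ((ζ - α) * ((starRingEnd ℂ) ζ - (starRingEnd ℂ) α)) *
        ((1 - ζ * (starRingEnd ℂ) α) * (1 - (starRingEnd ℂ) ζ * α))⁻¹ by
    rw [mul_inv]; ring]
  rw [hnum]
  exact mul_inv_cancel₀ (mul_ne_zero h1 h2)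

lemma conj_ne_aux {ζ α : ℂ} (h : (1 : ℂ) - ζ * (starRingEnd ℂ) α ≠ 0) :
    (1 : ℂ) - (starRingEnd ℂ) ζ * α ≠ 0 := by
  intro hh
  apply h
  have := congrArg (starRingEnd ℂ) hh
  simpa using this

lemma abs_le_of_mul_conj {ζ : ℂ} (h : ζ * (starRingEnd ℂ) ζ = 1) : ‖ζ‖ ≤ 1 := by
  have hn : Complex.normSq ζ = 1 := by
    have h' := (Complex.mul_conj ζ).symm.trans h
    exact_mod_cast h'
  have hsq := Complex.sq_norm ζ
  rw [hn] at hsq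
  nlinarith [norm_nonneg ζ]

lemma mkB_real (ν μ : ℝ) : ofR ν * e + ofR μ * edag = mkB (ν : ℂ) (μ : ℂ) := by
  ext <;> simp [ofR, e, edag, mkB] <;> ring

theorem blaschke_factor_properties (a : BC)
    (ha : ‖beta1 a‖ < 1 ∧ ‖beta2 a‖ < 1) :
    (∀ Z : BC, ‖beta1 Z‖ < 1 → ‖beta2 Z‖ < 1 →
      (1 - ba a Z * bstar (ba a Z) =
          (1 - Z * bstar Z) * (1 - a * bstar a) *
            Ring.inverse ((1 - Z * bstar a) * (1 - bstar Z * a)) ∧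
        1 - ba a Z * bstar (ba a Z) ∈ Dpos)) ∧
    (∀ Z : BC, Z * bstar Z = 1 → ba a Z * bstar (ba a Z) = 1) := by
  obtain ⟨ha1, ha2⟩ := ha
  constructor
  · intro Z hZ1 hZ2
    have hd1 : (1 : ℂ) - beta1 Z * (starRingEnd ℂ) (beta1 a) ≠ 0 :=
      one_sub_mul_conj_ne hZ1.le ha1
    have hd2 : (1 : ℂ) - beta2 Z * (starRingEnd ℂ) (beta2 a) ≠ 0 :=
      one_sub_mul_conj_ne hZ2.le ha2
    have hb1 : beta1 (1 - Z * bstar a) = 1 - beta1 Z * (starRingEnd ℂ) (beta1 a) := by simp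
    have hb2 : beta2 (1 - Z * bstar a) = 1 - beta2 Z * (starRingEnd ℂ) (beta2 a) := by simp
    have hinv1 : Ring.inverse (1 - Z * bstar a)
        = mkB (1 - beta1 Z * (starRingEnd ℂ) (beta1 a))⁻¹
            (1 - beta2 Z * (starRingEnd ℂ) (beta2 a))⁻¹ := by
      rw [ringInverse_betas (by rw [hb1]; exact hd1) (by rw [hb2]; exact hd2), hb1, hb2]
    have hP1 : beta1 ((1 - Z * bstar a) * (1 - bstar Z * a))
        = (1 - beta1 Z * (starRingEnd ℂ) (beta1 a)) *
          (1 - (starRingEnd ℂ) (beta1 Z) * beta1 a) := by simp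
    have hP2 : beta2 ((1 - Z * bstar a) * (1 - bstar Z * a))
        = (1 - beta2 Z * (starRingEnd ℂ) (beta2 a)) *
          (1 - (starRingEnd ℂ) (beta2 Z) * beta2 a) := by simp
    have hinv2 : Ring.inverse ((1 - Z * bstar a) * (1 - bstar Z * a))
        = mkB ((1 - beta1 Z * (starRingEnd ℂ) (beta1 a)) *
              (1 - (starRingEnd ℂ) (beta1 Z) * beta1 a))⁻¹
            ((1 - beta2 Z * (starRingEnd ℂ) (beta2 a)) *
              (1 - (starRingEnd ℂ) (beta2 Z) * beta2 a))⁻¹ := by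
      rw [ringInverse_betas (by rw [hP1]; exact mul_ne_zero hd1 (conj_ne_aux hd1))
        (by rw [hP2]; exact mul_ne_zero hd2 (conj_ne_aux hd2)), hP1, hP2]
    constructor
    · apply beta_ext
      · simp only [beta1_sub, beta1_one, beta1_mul, beta1_bstar, ba, hinv1, hinv2, beta1_mkB]
        exact cx_blaschke _ _ hZ1 ha1
      · simp only [beta2_sub, beta2_one, beta2_mul, beta2_bstar, ba, hinv1, hinv2, beta2_mkB]
        exact cx_blaschke _ _ hZ2 ha2
    · refine ⟨1 - Complex.normSq ((beta1 Z - beta1 a) *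
          (1 - beta1 Z * (starRingEnd ℂ) (beta1 a))⁻¹),
        1 - Complex.normSq ((beta2 Z - beta2 a) *
          (1 - beta2 Z * (starRingEnd ℂ) (beta2 a))⁻¹),
        sub_nonneg.mpr (cx_normSq_le hZ1 ha1), sub_nonneg.mpr (cx_normSq_le hZ2 ha2), ?_⟩
      rw [mkB_real]
      apply beta_ext
      · simp only [beta1_sub, beta1_one, beta1_mul, beta1_bstar, ba, hinv1, beta1_mkB]
        push_cast
        rw [Complex.mul_conj]
      · simp only [beta2_sub, beta2_one, beta2_mul, beta2_bstar, ba, hinv1, beta2_mkB]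
        push_cast
        rw [Complex.mul_conj]
  · intro Z hZ
    have h1 : beta1 Z * (starRingEnd ℂ) (beta1 Z) = 1 := by
      have := congrArg beta1 hZ; simpa using this
    have h2 : beta2 Z * (starRingEnd ℂ) (beta2 Z) = 1 := by
      have := congrArg beta2 hZ; simpa using this
    have hd1 : (1 : ℂ) - beta1 Z * (starRingEnd ℂ) (beta1 a) ≠ 0 :=
      one_sub_mul_conj_ne (abs_le_of_mul_conj h1) ha1
    have hd2 : (1 : ℂ) - beta2 Z * (starRingEnd ℂ) (beta2 a) ≠ 0 :=
      one_sub_mul_conj_ne (abs_le_of_mul_conj h2) ha2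
    have hb1 : beta1 (1 - Z * bstar a) = 1 - beta1 Z * (starRingEnd ℂ) (beta1 a) := by simp
    have hb2 : beta2 (1 - Z * bstar a) = 1 - beta2 Z * (starRingEnd ℂ) (beta2 a) := by simp
    have hinv1 : Ring.inverse (1 - Z * bstar a)
        = mkB (1 - beta1 Z * (starRingEnd ℂ) (beta1 a))⁻¹
            (1 - beta2 Z * (starRingEnd ℂ) (beta2 a))⁻¹ := by
      rw [ringInverse_betas (by rw [hb1]; exact hd1) (by rw [hb2]; exact hd2), hb1, hb2]
    apply beta_ext
    · simp only [beta1_mul, beta1_bstar, beta1_one, beta1_sub, ba, hinv1, beta1_mkB]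
      exact cx_boundary h1 ha1
    · simp only [beta2_mul, beta2_bstar, beta2_one, beta2_sub, ba, hinv1, beta2_mkB]
      exact cx_boundary h2 ha2

end BC
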